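/- Let k be a field, V a k-vector space of finite even dimension n, Q : V → k a quadratic form, and (b i)_{i ∈ Fin n} an orthogonal basis of V for Q, with associated element d := ι(b 0)·ι(b 1)⋯ι(b (n−1)) ∈ CliffordAlgebra Q. Then d lies in the even part evenOdd Q 0, and d commutes with every element of the even part: d·x = x·d for all x ∈ evenOdd Q 0. -/

import Mathlib

open CliffordAlgebra

section Aux

variable {k : Type*} [Field k] {V : Type*} [AddCommGroup V] [Module k V]
  (Q : QuadraticForm k V)

/-- products of `ι`'s lie in the appropriate power of the range. -/
lemma aux_prod_mem_pow (l : List V) :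
    (l.map (ι Q)).prod ∈ LinearMap.range (ι Q) ^ l.length := by
  induction l with
  | nil =>
    rw [List.map_nil, List.prod_nil, List.length_nil, pow_zero]
    exact Submodule.one_le.mp le_rfl
  | cons w t ih =>
    rw [List.map_cons, List.prod_cons, List.length_cons, pow_succ']
    exact Submodule.mul_mem_mul (LinearMap.mem_range_self _ w) ih

open Classical in
/-- moving `ι Q v` across a product of `ι`'s of vectors each equal to `v` or orthogonal to it. -/
lemma aux_comm (v : V) (l : List V)
    (h : ∀ w ∈ l, w = v ∨ QuadraticMap.polar Q v w = 0) :
    ι Q v * (l.map (ι Q)).prod =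
      ((-1 : k) ^ (l.countP (fun w => decide (w ≠ v)))) • ((l.map (ι Q)).prod * ι Q v) := by
  induction l with
  | nil => simp
  | cons w t ih =>
    have ht : ∀ w ∈ t, w = v ∨ QuadraticMap.polar Q v w = 0 := fun x hx =>
      h x (List.mem_cons_of_mem _ hx)
    have ih' := ih ht
    by_cases hwv : w = v
    · subst hwv
      have hc : List.countP (fun x => decide (x ≠ w)) (w :: t)
          = List.countP (fun x => decide (x ≠ w)) t := by
        simp [List.countP_cons]
      rw [List.map_cons, List.prod_cons, hc, mul_assoc, ← mul_smul_comm, ← ih']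
    · have hpol : QuadraticMap.polar Q v w = 0 := by
        rcases h w List.mem_cons_self with h1 | h2
        · exact absurd h1 hwv
        · exact h2
      have hvw : ι Q v * ι Q w = -(ι Q w * ι Q v) :=
        ι_mul_ι_comm_of_isOrtho (by
          rw [QuadraticMap.isOrtho_def, ← sub_eq_zero]
          have hp : Q (v + w) - Q v - Q w = 0 := hpol
          linear_combination hp)
      have hc : List.countP (fun x => decide (x ≠ v)) (w :: t)
          = List.countP (fun x => decide (x ≠ v)) t + 1 := by
        simp [List.countP_cons, hwv]
      rw [List.map_cons, List.prod_cons, hc, ← mul_assoc, hvw, neg_mul, mul_assoc, ih',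
        mul_smul_comm, pow_succ, mul_neg_one, neg_smul, mul_assoc]

end Aux

theorem clifford_d_central_in_even_of_even
    (k : Type*) [Field k]
    (V : Type*) [AddCommGroup V] [Module k V]
    (n : ℕ) (hn : Even n) (Q : QuadraticForm k V) (b : Module.Basis (Fin n) k V)
    (horth : ∀ i j : Fin n, i ≠ j → QuadraticMap.polar Q (b i) (b j) = 0)
    (d : CliffordAlgebra Q) (hd : d = (List.ofFn fun i : Fin n => ι Q (b i)).prod) :
    d ∈ evenOdd Q 0 ∧ ∀ x ∈ evenOdd Q 0, d * x = x * d := by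
  classical
  have hdmap : d = ((List.ofFn b).map (ι Q)).prod := by
    rw [hd, List.map_ofFn]; rfl
  -- membership
  have hmem : d ∈ evenOdd Q 0 := by
    have hp := aux_prod_mem_pow Q (List.ofFn b)
    rw [List.length_ofFn] at hp
    have hcast : ((n : ℕ) : ZMod 2) = 0 := by
      obtain ⟨m, rfl⟩ := hn
      push_cast
      rw [← two_mul]
      rw [show (2 : ZMod 2) = 0 from rfl, zero_mul]
    rw [hdmap]
    exact Submodule.mem_iSup_of_mem ⟨n, hcast⟩ hp
  -- anticommutation with basis vectors
  have hbasis : ∀ j : Fin n, ι Q (b j) * d = -(d * ι Q (b j)) := by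
    intro j
    have hh : ∀ w ∈ List.ofFn b, w = b j ∨ QuadraticMap.polar Q (b j) w = 0 := by
      intro w hw
      rw [List.mem_ofFn] at hw
      obtain ⟨i, rfl⟩ := hw
      by_cases hij : i = j
      · exact Or.inl (by rw [hij])
      · exact Or.inr (horth j i (Ne.symm hij))
    have hcount : (List.ofFn b).countP (fun w => decide (w ≠ b j)) = n - 1 := by
      rw [List.ofFn_eq_map, List.countP_map]
      have h1 : ((List.finRange n).countP ((fun w => decide (w ≠ b j)) ∘ b))
          = (List.finRange n).countP fun i => decide (i ≠ j) :=
        List.countP_congr (by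
          intro i _
          simp [Function.comp, b.injective.ne_iff])
      rw [h1]
      have h2 := List.length_eq_countP_add_countP (p := fun i : Fin n => decide (i ≠ j))
        (l := List.finRange n)
      have h3 : (List.finRange n).countP (fun a : Fin n => ¬(decide (a ≠ j) : Bool)) = 1 := by
        have hq := List.countP_congr (l := List.finRange n)
          (p := fun a : Fin n => ¬(decide (a ≠ j) : Bool)) (q := fun a : Fin n => a == j)
          (by intro x _; simp)
        rw [hq]
        exact List.count_eq_one_of_mem (List.nodup_finRange n) (List.mem_finRange j)
      rw [List.length_finRange] at h2
      omega
    have hodd : Odd (n - 1) := by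
      have hn1 : 1 ≤ n := by have := j.2; omega
      exact Nat.Even.sub_odd hn1 hn odd_one
    have hcm := aux_comm Q (b j) (List.ofFn b) hh
    rw [hcount, hodd.neg_one_pow, ← hdmap] at hcm
    rw [hcm, neg_one_smul]
  -- anticommutation with all vectors, via linearity
  have hanti : ∀ v : V, ι Q v * d = -(d * ι Q v) := by
    have heq : (LinearMap.mulRight k d).comp (ι Q) + (LinearMap.mulLeft k d).comp (ι Q)
        = (0 : V →ₗ[k] CliffordAlgebra Q) := by
      apply b.ext
      intro j
      simp only [LinearMap.add_apply, LinearMap.comp_apply, LinearMap.mulRight_apply,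
        LinearMap.mulLeft_apply, LinearMap.zero_apply]
      rw [hbasis j, neg_add_cancel]
    intro v
    have hv := congrFun (congrArg DFunLike.coe heq) v
    simp only [LinearMap.add_apply, LinearMap.comp_apply, LinearMap.mulRight_apply,
      LinearMap.mulLeft_apply, LinearMap.zero_apply] at hv
    exact eq_neg_of_add_eq_zero_left hv
  refine ⟨hmem, ?_⟩
  intro x hx
  induction x, hx using even_induction with
  | algebraMap r => exact (Algebra.commutes r d).symm.trans rfl
  | add x y hx hy ihx ihy => rw [mul_add, add_mul, ihx, ihy]
  | ι_mul_ι_mul m₁ m₂ x hx ih =>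
    have h₁ : d * ι Q m₁ = -(ι Q m₁ * d) := by rw [hanti m₁, neg_neg]
    have h₂ : d * ι Q m₂ = -(ι Q m₂ * d) := by rw [hanti m₂, neg_neg]
    calc d * (ι Q m₁ * ι Q m₂ * x)
        = ((d * ι Q m₁) * ι Q m₂) * x := by rw [← mul_assoc, ← mul_assoc]
      _ = ((-(ι Q m₁ * d)) * ι Q m₂) * x := by rw [h₁]
      _ = -(ι Q m₁ * ((d * ι Q m₂) * x)) := by simp [mul_assoc]
      _ = -(ι Q m₁ * ((-(ι Q m₂ * d)) * x)) := by rw [h₂]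
      _ = ι Q m₁ * (ι Q m₂ * (d * x)) := by simp [mul_assoc]
      _ = ι Q m₁ * (ι Q m₂ * (x * d)) := by rw [ih]
      _ = (ι Q m₁ * ι Q m₂ * x) * d := by simp [mul_assoc]
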